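/- Let U ⊆ ℝⁿ be open and f ∈ C(U) with the property that the set {(x, ∇f(x)) : x ∈ Diff(f)} is dense in U × ℝⁿ, where Diff(f) is the set of points of pointwise differentiability of f. Let E_f = {(x,t) ∈ U × ℝ : t ≤ f(x)} and G = {(x,f(x)) : x ∈ U}. Then the proximal unit normal bundle nor(E_f) is dense in G × 𝕊ⁿ₊, where 𝕊ⁿ₊ = {(z,t) ∈ ℝⁿ × ℝ : |z|² + t² = 1, t > 0}. -/

import Mathlib

open Metric

noncomputable section

/-- The proximal unit normal bundle of a subset of the Euclidean space
`ℝⁿ × ℝ ≅ ℝ^{n+1}` (with the `ℓ²` norm). -/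
def norBundleP (n : ℕ) (C : Set (WithLp 2 (EuclideanSpace ℝ (Fin n) × ℝ))) :
    Set (WithLp 2 (EuclideanSpace ℝ (Fin n) × ℝ) × WithLp 2 (EuclideanSpace ℝ (Fin n) × ℝ)) :=
  {q | q.1 ∈ closure C ∧ ‖q.2‖ = 1 ∧ ∃ s : ℝ, 0 < s ∧ infDist (q.1 + s • q.2) C = s}

/-- The subgraph of `f : U → ℝ` as a subset of `ℝⁿ × ℝ ≅ ℝ^{n+1}`. -/
def subgraph (n : ℕ) (U : Set (EuclideanSpace ℝ (Fin n)))
    (f : EuclideanSpace ℝ (Fin n) → ℝ) : Set (WithLp 2 (EuclideanSpace ℝ (Fin n) × ℝ)) :=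
  {p | ((WithLp.equiv 2 (EuclideanSpace ℝ (Fin n) × ℝ)) p).1 ∈ U ∧
    ((WithLp.equiv 2 (EuclideanSpace ℝ (Fin n) × ℝ)) p).2 ≤
      f (((WithLp.equiv 2 (EuclideanSpace ℝ (Fin n) × ℝ)) p).1)}

/- ### Auxiliary material -/

/-- Shorthand for making points of `ℝⁿ ×₂ ℝ`. -/
def pmk {n : ℕ} (a : EuclideanSpace ℝ (Fin n)) (b : ℝ) :
    WithLp 2 (EuclideanSpace ℝ (Fin n) × ℝ) :=
  (WithLp.equiv 2 _).symm (a, b)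

section aux

variable {n : ℕ}

local notation "V" => EuclideanSpace ℝ (Fin n)
local notation "P" => WithLp 2 (EuclideanSpace ℝ (Fin n) × ℝ)

lemma pmk_add (a c : V) (b d : ℝ) : pmk a b + pmk c d = pmk (a+c) (b+d) := rfl
lemma pmk_sub (a c : V) (b d : ℝ) : pmk a b - pmk c d = pmk (a-c) (b-d) := rfl
lemma pmk_smul (r : ℝ) (a : V) (b : ℝ) : r • pmk a b = pmk (r • a) (r * b) := rfl
lemma pmk_eta (p : P) : pmk ((WithLp.equiv 2 _) p).1 ((WithLp.equiv 2 _) p).2 = p := rfl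

lemma norm_pmk_sq (a : V) (b : ℝ) : ‖pmk a b‖^2 = ‖a‖^2 + b^2 := by
  have := WithLp.prod_norm_sq_eq_of_L2 (pmk a b)
  simpa [pmk, Real.norm_eq_abs, sq_abs] using this

lemma inner_pmk (a c : V) (b d : ℝ) : (inner ℝ (pmk a b) (pmk c d) : ℝ) = inner ℝ a c + b * d := by
  rw [WithLp.prod_inner_apply]
  norm_num [RCLike.inner_apply]
  change inner ℝ a c + d * b = inner ℝ a c + b * d
  ring

lemma sq_le_sq_imp_le {a b : ℝ} (hb : 0 ≤ b) (h : a^2 ≤ b^2) : a ≤ b := by nlinarith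

lemma norm_pmk_fst_le (a : V) (b : ℝ) : ‖a‖ ≤ ‖pmk a b‖ :=
  sq_le_sq_imp_le (norm_nonneg _) (by rw [norm_pmk_sq]; nlinarith [sq_nonneg b])

lemma norm_pmk_le (a : V) (b : ℝ) : ‖pmk a b‖ ≤ ‖a‖ + |b| := by
  refine sq_le_sq_imp_le (by positivity) ?_
  rw [norm_pmk_sq]
  nlinarith [norm_nonneg a, abs_nonneg b, sq_abs b]

lemma norm_pmk_zero (a : V) : ‖pmk a 0‖ = ‖a‖ :=
  le_antisymm (by simpa using norm_pmk_le a 0) (norm_pmk_fst_le a 0)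

lemma dist_pmk (a c : V) (b d : ℝ) : dist (pmk a b) (pmk c d) = ‖pmk (a-c) (b-d)‖ := by
  rw [dist_eq_norm, pmk_sub]

lemma sqrt_one_add_sq_facts (a : ℝ) (ha : 0 ≤ a) :
    1 ≤ Real.sqrt (1 + a^2) ∧ a ≤ Real.sqrt (1 + a^2) := by
  have h1 : (Real.sqrt (1 + a^2))^2 = 1 + a^2 := Real.sq_sqrt (by positivity)
  have h2 : 0 ≤ Real.sqrt (1 + a^2) := Real.sqrt_nonneg _
  constructor <;> nlinarith [h1, h2, sq_nonneg a]

lemma le_infDist' {α : Type*} [MetricSpace α] {s : Set α} (hs : s.Nonempty) {x : α} {d : ℝ}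
    (h : ∀ y ∈ s, d ≤ dist x y) : d ≤ infDist x s := by
  rw [infDist_eq_iInf]
  haveI := hs.to_subtype
  exact le_ciInf fun y => h y y.2

lemma aux_eta (eta M ng : ℝ) (h4 : eta * (4*(M+2)) ≤ 1) (hg : ng ≤ M+1)
    (hng : 0 ≤ ng) (hM : 0 ≤ M) (he : 0 < eta) : eta * ng ≤ 1/4 := by
  nlinarith [mul_le_mul_of_nonneg_left hg he.le]

lemma aux_sq_eq (x : ℝ) (h0 : 0 ≤ x) (h : x^2 = 1) : x = 1 := by nlinarith

lemma aux_vsq (t nz : ℝ) (ht : 0 < t) (h : nz^2 + t^2 = 1) :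
    (t⁻¹*nz)^2 = (t⁻¹)^2 - 1 := by
  have h0 : t ≠ 0 := ht.ne'
  field_simp
  linarith

lemma aux_near (r ρ η ng U2 ip dct : ℝ)
    (hr : 0 < r) (hρ : 0 < ρ) (hρ1 : ρ ≤ 1) (hη : 0 < η) (hη18 : η ≤ 1/8)
    (hρsq : ρ^2*(1+ng^2) = 1) (hηg : η*ng ≤ 1/4) (hng : 0 ≤ ng)
    (hU2 : 0 ≤ U2) (hCS1 : -(U2*ng) ≤ ip) (hCS2 : ip ≤ U2*ng)
    (hct : r*ρ - ip - η*U2 ≤ dct) :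
    (r*(1-η))^2 ≤ (U2^2 + 2*(r*ρ)*ip + (r*ρ)^2*ng^2) + dct^2 := by
  have e1 : r^2*(ρ^2*(1+ng^2)) = r^2 := by rw [hρsq, mul_one]
  rcases le_total (r*ρ - ip - η*U2) 0 with hcase | hcase
  · have hip : r*ρ - η*U2 ≤ ip := by linarith
    have hipp := mul_le_mul_of_nonneg_left hip
      (by positivity : (0:ℝ) ≤ 2*(r*ρ))
    have e2 : 0 ≤ r^2*ρ^2*(1-η^2) := by
      apply mul_nonneg (mul_nonneg (sq_nonneg r) (sq_nonneg ρ))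
      nlinarith
    have e3 : 0 ≤ r^2*(2*η-η^2) := mul_nonneg (sq_nonneg r) (by nlinarith)
    linarith [sq_nonneg dct, sq_nonneg (U2 - η*(r*ρ)), hipp, e1, e2, e3]
  · have hsq : (r*ρ - ip - η*U2)^2 ≤ dct^2 := by nlinarith
    have ha_le : r*ρ - ip ≤ r + ng*U2 := by nlinarith
    have hm0 : 0 ≤ η*U2 := by positivity
    have hprod : (η*U2)*(r*ρ - ip) ≤ (η*U2)*(r + ng*U2) :=
      mul_le_mul_of_nonneg_left ha_le hm0
    have h4 : 0 ≤ (1/4 - η*ng)*U2^2 := mul_nonneg (by linarith) (sq_nonneg _)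
    have h5 : 0 ≤ r^2*(2*η - 3*η^2) := mul_nonneg (sq_nonneg r) (by nlinarith)
    linarith [hsq, e1, sq_nonneg (U2 - 2*η*r), sq_nonneg ip, sq_nonneg (η*U2),
      hprod, h4, h5]

lemma aux_far (r η dv A B : ℝ) (hr : 0 < r) (hη : 0 < η) (hη18 : η ≤ 1/8)
    (hrδ : r ≤ dv/8) (h2 : dv - r ≤ A) : (r*(1-η))^2 ≤ A^2 + B^2 := by
  have h0 : 0 ≤ r*(1-η) := by nlinarith
  have hra : r*(1-η) ≤ A := by nlinarith
  nlinarith [mul_self_le_mul_self h0 hra, sq_nonneg B]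

lemma aux_inner (r ρ η ng U2 ip dct : ℝ) (hρ : 0 < ρ) (hρ1 : ρ ≤ 1) (hη : 0 < η)
    (hρsq : ρ^2*(1+ng^2) = 1) (hU2 : 0 ≤ U2) (h2r : U2 ≤ 2*r)
    (hct : r*ρ - ip - η*U2 ≤ dct) :
    r*(1 - 2*η) ≤ ρ*(ip + (r*ρ)*ng^2) + dct*ρ := by
  have h1 := mul_le_mul_of_nonneg_left hct hρ.le
  have h2 : ρ*(η*U2) ≤ η*(2*r) := by
    nlinarith [mul_le_mul_of_nonneg_left h2r hη.le, mul_le_mul_of_nonneg_right hρ1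
      (mul_nonneg hη.le hU2)]
  have e : r*(ρ^2*(1+ng^2)) = r := by rw [hρsq, mul_one]
  nlinarith [h1, h2, e]

lemma aux_absdiff (a b d GA GB : ℝ) (ha : 0 ≤ a) (hb : 0 ≤ b)
    (hd1 : a - b ≤ d) (hd2 : b - a ≤ d)
    (hGA : GA^2 = 1+a^2) (hGB : GB^2 = 1+b^2) (h1A : 1 ≤ GA) (h1B : 1 ≤ GB)
    (haA : a ≤ GA) (hbB : b ≤ GB) : |GB - GA| ≤ d := by
  have hd0 : 0 ≤ d := by linarith
  have hGAB : (0:ℝ) < GA + GB := by linarith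
  have hp3 : d*(a+b) ≤ d*(GA+GB) :=
    mul_le_mul_of_nonneg_left (by linarith) hd0
  rw [abs_le]
  constructor
  · have hp1 := mul_le_mul_of_nonneg_right hd1 (add_nonneg ha hb)
    nlinarith [hp1, hp3]
  · have hp2 := mul_le_mul_of_nonneg_right hd2 (add_nonneg ha hb)
    nlinarith [hp2, hp3]

lemma mem_norBundleP_of_proj (C : Set P) (c p : P) (hp : p ∈ closure C)
    (hpos : 0 < infDist c C) (hd : infDist c C = dist c p) :
    (p, (infDist c C)⁻¹ • (c - p)) ∈ norBundleP n C := by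
  have hc : p + (infDist c C) • ((infDist c C)⁻¹ • (c - p)) = c := by
    rw [smul_smul, mul_inv_cancel₀ hpos.ne', one_smul]; abel
  refine ⟨hp, ?_, infDist c C, hpos, by rw [hc]⟩
  rw [norm_smul, ← dist_eq_norm, ← hd, Real.norm_eq_abs, abs_of_pos (by positivity),
    inv_mul_cancel₀ hpos.ne']

end aux

set_option maxHeartbeats 4000000 in
/-- if the graph of the pointwise gradient of a continuous
function `f` is dense in `U × ℝⁿ`, then the proximal unit normal bundle of the
subgraph `E_f` is dense in `G × 𝕊ⁿ₊`, where `G` is the graph of `f` and `𝕊ⁿ₊`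
the open upper unit hemisphere. -/
theorem stmt_14 (n : ℕ) (U : Set (EuclideanSpace ℝ (Fin n))) (hU : IsOpen U)
    (f : EuclideanSpace ℝ (Fin n) → ℝ) (hf : ContinuousOn f U)
    (hdense : ∀ x ∈ U, ∀ v : EuclideanSpace ℝ (Fin n),
      (x, v) ∈ closure {q : EuclideanSpace ℝ (Fin n) × EuclideanSpace ℝ (Fin n) |
        q.1 ∈ U ∧ DifferentiableAt ℝ f q.1 ∧ q.2 = gradient f q.1}) :
    ∀ x ∈ U, ∀ ν : WithLp 2 (EuclideanSpace ℝ (Fin n) × ℝ), ‖ν‖ = 1 →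
      0 < ((WithLp.equiv 2 (EuclideanSpace ℝ (Fin n) × ℝ)) ν).2 →
      (((WithLp.equiv 2 (EuclideanSpace ℝ (Fin n) × ℝ)).symm (x, f x), ν)) ∈
        closure (norBundleP n (subgraph n U f)) := by
  intro x hx ν hν ht
  set z : EuclideanSpace ℝ (Fin n) := ((WithLp.equiv 2 _) ν).1 with hz
  set t : ℝ := ((WithLp.equiv 2 _) ν).2 with htdef
  have hνz : ν = pmk z t := rfl
  have hzt : ‖z‖^2 + t^2 = 1 := by
    have h1 : ‖ν‖^2 = 1 := by rw [hν]; norm_num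
    rwa [hνz, norm_pmk_sq] at h1
  clear_value z t
  rw [Metric.mem_closure_iff]
  intro ε hε
  -- continuity of `f` at `x`
  have hcx : ContinuousAt f x := hf.continuousAt (hU.mem_nhds hx)
  obtain ⟨δf, hδf, hδf'⟩ := Metric.continuousAt_iff.mp hcx (ε/8) (by positivity)
  set v₀ : EuclideanSpace ℝ (Fin n) := (-t⁻¹) • z with hv₀
  set ε' : ℝ := min (min (ε/8) 1) δf with hε'def
  have hε'pos : 0 < ε' := lt_min (lt_min (by positivity) one_pos) hδf
  have hε'ε : ε' ≤ ε/8 := le_trans (min_le_left _ _) (min_le_left _ _)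
  have hε'1 : ε' ≤ 1 := le_trans (min_le_left _ _) (min_le_right _ _)
  have hε'δf : ε' ≤ δf := min_le_right _ _
  -- a nearby point of differentiability with gradient close to `v₀`
  obtain ⟨q, hq, hqd⟩ := Metric.mem_closure_iff.mp (hdense x hx v₀) ε' hε'pos
  obtain ⟨hx'U, hdiff, hgrad⟩ := hq
  set x' := q.1 with hx'def
  set g : EuclideanSpace ℝ (Fin n) := gradient f x' with hgdef
  have hxx' : dist x x' < ε' :=
    lt_of_le_of_lt (by rw [Prod.dist_eq]; exact le_max_left _ _) hqd
  have hgv : ‖g - v₀‖ < ε' := by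
    have h1 : dist v₀ q.2 < ε' :=
      lt_of_le_of_lt (by rw [Prod.dist_eq]; exact le_max_right _ _) hqd
    rw [hgrad] at h1
    rw [dist_eq_norm, norm_sub_rev] at h1
    exact h1
  set M : ℝ := ‖v₀‖ with hMdef
  have hM0 : 0 ≤ M := norm_nonneg _
  set η : ℝ := min (ε^2/16) (1/(4*(M+2))) with hηdef
  have hηpos : 0 < η := lt_min (by positivity) (by positivity)
  have hη16 : η ≤ ε^2/16 := min_le_left _ _
  have hηM : η ≤ 1/(4*(M+2)) := min_le_right _ _
  have hgM : ‖g‖ ≤ M + 1 := by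
    calc ‖g‖ = ‖v₀ + (g - v₀)‖ := by congr 1; abel
    _ ≤ ‖v₀‖ + ‖g - v₀‖ := norm_add_le _ _
    _ ≤ M + 1 := by have := hgv.le.trans hε'1; linarith
  have hη4M : η * (4*(M+2)) ≤ 1 := (le_div_iff₀ (by positivity)).mp hηM
  have hηg : η * ‖g‖ ≤ 1/4 := aux_eta η M ‖g‖ hη4M hgM (norm_nonneg g) hM0 hηpos
  have hη18 : η ≤ 1/8 :=
    hηM.trans (one_div_le_one_div_of_le (by norm_num) (by linarith))
  -- differentiability estimate at x'
  have hgrad' : HasGradientAt f g x' := hdiff.hasGradientAt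
  rw [hasGradientAt_iff_isLittleO] at hgrad'
  have hev := hgrad'.def hηpos
  rw [Metric.eventually_nhds_iff] at hev
  obtain ⟨δ, hδpos, hδ⟩ := hev
  clear_value x' g v₀ ε' M η
  clear hgrad' hdiff hgrad hqd
  set r : ℝ := min (δ/8) (ε/8) with hrdef
  have hrpos : 0 < r := lt_min (by positivity) (by positivity)
  have hrδ : r ≤ δ/8 := min_le_left _ _
  have hrε : r ≤ ε/8 := min_le_right _ _
  set G : ℝ := Real.sqrt (1 + ‖g‖^2) with hGdef
  have hGsq : G^2 = 1 + ‖g‖^2 := Real.sq_sqrt (by positivity)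
  have hG0 : 0 ≤ G := Real.sqrt_nonneg _
  have hG1 : 1 ≤ G := (sqrt_one_add_sq_facts ‖g‖ (norm_nonneg g)).1
  have hgG : ‖g‖ ≤ G := (sqrt_one_add_sq_facts ‖g‖ (norm_nonneg g)).2
  set ρ : ℝ := G⁻¹ with hρdef
  have hρpos : 0 < ρ := by positivity
  have hρ1 : ρ ≤ 1 := by rw [hρdef]; exact inv_le_one_of_one_le₀ hG1
  have hρsq : ρ^2 * (1 + ‖g‖^2) = 1 := by
    rw [hρdef, ← hGsq]
    field_simp
  have hρG : ρ * G = 1 := by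
    rw [hρdef]
    exact inv_mul_cancel₀ (by positivity)
  clear_value r G ρ
  set w : WithLp 2 (EuclideanSpace ℝ (Fin n) × ℝ) := pmk (ρ • (-g)) ρ with hwdef
  have hw1 : ‖w‖ = 1 := by
    have h1 : ‖w‖^2 = 1 := by
      rw [hwdef, norm_pmk_sq, norm_smul, Real.norm_eq_abs, abs_of_pos hρpos, norm_neg,
        mul_pow]
      linear_combination hρsq
    exact aux_sq_eq _ (norm_nonneg w) h1
  clear_value w
  set cx : EuclideanSpace ℝ (Fin n) := x' - (r*ρ) • g with hcxdef
  set ct : ℝ := f x' + r*ρ with hctdef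
  set c : WithLp 2 (EuclideanSpace ℝ (Fin n) × ℝ) := pmk cx ct with hcdef
  have hcw : c = pmk x' (f x') + r • w := by
    rw [hcdef, hcxdef, hctdef, hwdef, pmk_smul, pmk_add, smul_smul, smul_neg,
      ← sub_eq_add_neg]
  clear_value cx ct c
  set Ef := subgraph n U f with hEfdef
  have hEmem : pmk x' (f x') ∈ Ef := ⟨hx'U, le_refl _⟩
  have hne : Ef.Nonempty := ⟨_, hEmem⟩
  -- the key lower bound on distances to the subgraph
  have hkey1 : ∀ p ∈ Ef, r*(1-η) ≤ dist c p := by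
    intro p hp
    obtain ⟨hpU, hpτ⟩ := hp
    set yp := ((WithLp.equiv 2 (EuclideanSpace ℝ (Fin n) × ℝ)) p).1 with hypdef
    set τp := ((WithLp.equiv 2 (EuclideanSpace ℝ (Fin n) × ℝ)) p).2 with hτpdef
    have hpeq : p = pmk yp τp := rfl
    clear_value yp τp
    have hdist2 : (dist c p)^2 = ‖cx - yp‖^2 + (ct - τp)^2 := by
      rw [hcdef, hpeq, dist_pmk, norm_pmk_sq]
    refine sq_le_sq_imp_le dist_nonneg ?_
    rw [hdist2]
    rcases lt_or_ge (dist yp x') δ with hnear | hfar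
    · -- near case
      set u := yp - x' with hudef
      have hplane : τp ≤ f x' + inner ℝ g u + η * ‖u‖ := by
        have h1 := hδ hnear
        rw [Real.norm_eq_abs] at h1
        have h2 : f yp - f x' - inner ℝ g (yp - x') ≤ η * ‖yp - x'‖ :=
          (le_abs_self _).trans h1
        have h3 : dist yp x' = ‖u‖ := by rw [dist_eq_norm]
        rw [hudef]
        linarith [hpτ]
      have hcxy : cx - yp = -(u + (r*ρ) • g) := by
        rw [hcxdef, hudef]; abel
      have hA : ‖cx - yp‖^2 = ‖u‖^2 + 2*(r*ρ)*(inner ℝ u g : ℝ) + (r*ρ)^2*‖g‖^2 := by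
        rw [hcxy, norm_neg, norm_add_sq_real, real_inner_smul_right, norm_smul,
          Real.norm_eq_abs, mul_pow, sq_abs]
        ring
      have hCS : |(inner ℝ u g : ℝ)| ≤ ‖u‖ * ‖g‖ := abs_real_inner_le_norm u g
      obtain ⟨hCS1, hCS2⟩ := abs_le.mp hCS
      have hgu : (inner ℝ g u : ℝ) = inner ℝ u g := real_inner_comm u g
      have hct : r*ρ - inner ℝ u g - η*‖u‖ ≤ ct - τp := by
        rw [hctdef]
        have := hplane
        rw [hgu] at this
        linarith
      have hu0 : (0:ℝ) ≤ ‖u‖ := norm_nonneg u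
      rw [hA]
      have hCS1' : -(‖u‖*‖g‖) ≤ (inner ℝ u g : ℝ) := by linarith
      exact aux_near r ρ η ‖g‖ ‖u‖ (inner ℝ u g) (ct - τp) hrpos hρpos hρ1 hηpos hη18
        hρsq hηg (norm_nonneg g) hu0 hCS1' hCS2 hct
    · -- far case
      have h1 : ‖(r*ρ) • g‖ ≤ r := by
        rw [norm_smul, Real.norm_eq_abs, abs_of_pos (mul_pos hrpos hρpos)]
        calc r*ρ*‖g‖ ≤ r*(ρ*G) := by
              linarith [mul_le_mul_of_nonneg_left hgG (mul_nonneg hrpos.le hρpos.le)]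
        _ = r := by rw [hρG, mul_one]
      have h2 : δ - r ≤ ‖cx - yp‖ := by
        have h3 : ‖yp - x'‖ ≤ ‖cx - yp‖ + ‖(r*ρ) • g‖ := by
          have he : yp - x' = -(cx - yp) - (r*ρ) • g := by rw [hcxdef]; abel
          rw [he]
          exact (norm_sub_le _ _).trans (by rw [norm_neg])
        have h4 : dist yp x' = ‖yp - x'‖ := dist_eq_norm _ _
        linarith
      exact aux_far r η δ ‖cx - yp‖ (ct - τp) hrpos hηpos hη18 hrδ h2
  have hsl : r*(1-η) ≤ infDist c Ef := le_infDist' hne hkey1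
  have hdcx : dist c (pmk x' (f x')) = r := by
    rw [hcw]
    simp only [dist_eq_norm, add_sub_cancel_left]
    rw [norm_smul, Real.norm_eq_abs, abs_of_pos hrpos, hw1, mul_one]
  have hsu : infDist c Ef ≤ r := (infDist_le_dist_of_mem hEmem).trans_eq hdcx
  set s : ℝ := infDist c Ef with hsdef
  have hspos : 0 < s := lt_of_lt_of_le (mul_pos hrpos (by linarith)) hsl
  obtain ⟨p', hp'cl, hp'd⟩ := exists_mem_closure_infDist_eq_dist hne c
  set ν' := s⁻¹ • (c - p') with hν'def
  have hmem : (p', ν') ∈ norBundleP n Ef :=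
    mem_norBundleP_of_proj Ef c p' hp'cl hspos hp'd
  have hν'1 : ‖ν'‖ = 1 := hmem.2.1
  clear_value s
  -- coordinates of p'
  set y' := ((WithLp.equiv 2 (EuclideanSpace ℝ (Fin n) × ℝ)) p').1 with hy'def
  set τ' := ((WithLp.equiv 2 (EuclideanSpace ℝ (Fin n) × ℝ)) p').2 with hτ'def
  have hp'eq : p' = pmk y' τ' := rfl
  clear_value y' τ'
  have hdcp : dist c p' = s := by rw [hsdef]; exact hp'd.symm
  have hu2r : ‖y' - x'‖ ≤ 2*r := by
    have h1 : ‖y' - x'‖ ≤ ‖p' - pmk x' (f x')‖ := by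
      rw [hp'eq, pmk_sub]
      exact norm_pmk_fst_le _ _
    have h2 : ‖p' - pmk x' (f x')‖ ≤ dist p' c + dist c (pmk x' (f x')) := by
      rw [← dist_eq_norm]
      exact dist_triangle _ _ _
    rw [dist_comm p' c, hdcp, hdcx] at h2
    linarith [hsu]
  -- the closure of Ef still satisfies the tangent-plane bound near x'
  have hyτ : τ' ≤ f x' + inner ℝ g (y' - x') + η * ‖y' - x'‖ := by
    set S : Set (WithLp 2 (EuclideanSpace ℝ (Fin n) × ℝ)) :=
      {p | δ ≤ dist ((WithLp.equiv 2 (EuclideanSpace ℝ (Fin n) × ℝ)) p).1 x'} ∪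
      {p | ((WithLp.equiv 2 (EuclideanSpace ℝ (Fin n) × ℝ)) p).2 ≤
        f x' + inner ℝ g (((WithLp.equiv 2 (EuclideanSpace ℝ (Fin n) × ℝ)) p).1 - x') +
          η * dist ((WithLp.equiv 2 (EuclideanSpace ℝ (Fin n) × ℝ)) p).1 x'} with hSdef
    have hc1 : Continuous (fun p : WithLp 2 (EuclideanSpace ℝ (Fin n) × ℝ) =>
        ((WithLp.equiv 2 (EuclideanSpace ℝ (Fin n) × ℝ)) p).1) :=
      continuous_fst.comp (WithLp.prodContinuousLinearEquiv 2 ℝ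
        (EuclideanSpace ℝ (Fin n)) ℝ).continuous
    have hc2 : Continuous (fun p : WithLp 2 (EuclideanSpace ℝ (Fin n) × ℝ) =>
        ((WithLp.equiv 2 (EuclideanSpace ℝ (Fin n) × ℝ)) p).2) :=
      continuous_snd.comp (WithLp.prodContinuousLinearEquiv 2 ℝ
        (EuclideanSpace ℝ (Fin n)) ℝ).continuous
    have hSclosed : IsClosed S := by
      apply IsClosed.union
      · exact isClosed_le continuous_const (hc1.dist continuous_const)
      · exact isClosed_le hc2 (by
          apply Continuous.add
          apply Continuous.add continuous_const
          · exact Continuous.inner continuous_const (hc1.sub continuous_const)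
          · exact continuous_const.mul (hc1.dist continuous_const))
    have hEfS : Ef ⊆ S := by
      intro p hp
      obtain ⟨hpU, hpτ⟩ := hp
      rcases le_or_gt δ (dist ((WithLp.equiv 2 (EuclideanSpace ℝ (Fin n) × ℝ)) p).1 x')
        with hfar | hnear
      · exact Or.inl hfar
      · refine Or.inr ?_
        simp only [Set.mem_setOf_eq]
        have h1 := hδ hnear
        rw [Real.norm_eq_abs] at h1
        have h2 := (le_abs_self _).trans h1
        have h3 : dist ((WithLp.equiv 2 (EuclideanSpace ℝ (Fin n) × ℝ)) p).1 x' =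
            ‖((WithLp.equiv 2 (EuclideanSpace ℝ (Fin n) × ℝ)) p).1 - x'‖ := dist_eq_norm _ _
        rw [h3]
        linarith
    have hp'S : p' ∈ S := closure_minimal hEfS hSclosed hp'cl
    simp only [hSdef, Set.mem_union, Set.mem_setOf_eq] at hp'S
    rcases hp'S with hfar | hok
    · exfalso
      rw [← hy'def] at hfar
      have : dist y' x' ≤ 2*r := by rw [dist_eq_norm]; exact hu2r
      have : δ ≤ 2*r := le_trans hfar this
      linarith [hrδ, hδpos]
    · have h3 : dist y' x' = ‖y' - x'‖ := dist_eq_norm _ _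
      rw [← hy'def, ← hτ'def, h3] at hok
      exact hok
  -- lower bound for the inner ℝ product with w
  have hinner : r*(1 - 2*η) ≤ (inner ℝ (c - p') w : ℝ) := by
    have hcp : c - p' = pmk (cx - y') (ct - τ') := by rw [hcdef, hp'eq, pmk_sub]
    rw [hcp, hwdef, inner_pmk]
    have h1 : (inner ℝ (cx - y') (ρ • (-g)) : ℝ) = ρ * (inner ℝ (y' - cx) g : ℝ) := by
      rw [real_inner_smul_right, inner_neg_right, ← inner_neg_left, neg_sub]
    have h2 : y' - cx = (y' - x') + (r*ρ) • g := by rw [hcxdef]; abel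
    have h3 : (inner ℝ (y' - cx) g : ℝ) = inner ℝ (y' - x') g + (r*ρ)*‖g‖^2 := by
      rw [h2, inner_add_left, real_inner_smul_left, real_inner_self_eq_norm_sq]
    have hgu : (inner ℝ g (y' - x') : ℝ) = inner ℝ (y' - x') g := real_inner_comm _ _
    have hct' : r*ρ - inner ℝ (y' - x') g - η*‖y' - x'‖ ≤ ct - τ' := by
      rw [hctdef]
      rw [hgu] at hyτ
      linarith
    have hu0 : (0:ℝ) ≤ ‖y' - x'‖ := norm_nonneg _
    calc r*(1-2*η) ≤ ρ * (inner ℝ (y' - x') g + (r*ρ)*‖g‖^2) + (ct - τ')*ρ :=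
          aux_inner r ρ η ‖g‖ ‖y' - x'‖ (inner ℝ (y' - x') g) (ct - τ') hρpos hρ1 hηpos
            hρsq hu0 hu2r hct'
    _ = (inner ℝ (cx - y') (ρ • (-g)) : ℝ) + (ct - τ')*ρ := by rw [h1, h3]
  -- first distance estimate
  have hd1 : dist ((WithLp.equiv 2 (EuclideanSpace ℝ (Fin n) × ℝ)).symm (x, f x)) p' < ε := by
    have e1 : dist ((WithLp.equiv 2 (EuclideanSpace ℝ (Fin n) × ℝ)).symm (x, f x))
        (pmk x' (f x')) ≤ ‖x - x'‖ + |f x - f x'| := by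
      have : ((WithLp.equiv 2 (EuclideanSpace ℝ (Fin n) × ℝ)).symm (x, f x) :
          WithLp 2 (EuclideanSpace ℝ (Fin n) × ℝ)) = pmk x (f x) := rfl
      rw [this, dist_pmk]
      exact norm_pmk_le _ _
    have e2 : ‖x - x'‖ < ε' := by rw [← dist_eq_norm]; exact hxx'
    have e3 : |f x - f x'| < ε/8 := by
      have := hδf' (lt_of_lt_of_le (by rw [dist_comm]; exact hxx') hε'δf)
      rw [Real.dist_eq] at this
      rw [abs_sub_comm]
      exact this
    calc dist ((WithLp.equiv 2 (EuclideanSpace ℝ (Fin n) × ℝ)).symm (x, f x)) p'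
        ≤ dist ((WithLp.equiv 2 (EuclideanSpace ℝ (Fin n) × ℝ)).symm (x, f x))
            (pmk x' (f x')) + dist (pmk x' (f x')) c + dist c p' := dist_triangle4 _ _ _ _
    _ ≤ (‖x - x'‖ + |f x - f x'|) + r + r := by
        rw [dist_comm (pmk x' (f x')) c, hdcx, hdcp]
        gcongr
    _ < ε := by
        have := hε'ε
        linarith [e2, e3, hrε]
  -- second distance estimate
  have hν'w : ‖ν' - w‖ ≤ ε/2 := by
    have hips : (1 - 2*η : ℝ) ≤ inner ℝ ν' w := by
      rw [hν'def, real_inner_smul_left]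
      have h1 : s * (1 - 2*η) ≤ r * (1 - 2*η) :=
        mul_le_mul_of_nonneg_right hsu (by linarith)
      have h2 : s⁻¹ * (s * (1-2*η)) ≤ s⁻¹ * (inner ℝ (c - p') w : ℝ) := by
        apply mul_le_mul_of_nonneg_left _ (by positivity)
        linarith [hinner]
      rwa [← mul_assoc, inv_mul_cancel₀ hspos.ne', one_mul] at h2
    have h3 : ‖ν' - w‖^2 ≤ 4*η := by
      rw [norm_sub_sq_real, hν'1, hw1]
      linarith [hips]
    refine sq_le_sq_imp_le (by positivity) ?_
    calc ‖ν' - w‖^2 ≤ 4*η := h3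
    _ ≤ ε^2/4 := by linarith [hη16]
    _ = (ε/2)^2 := by ring
  have hwνb : ‖w - ν‖ ≤ 2*‖g - v₀‖ := by
    have htne : t ≠ 0 := ht.ne'
    have hzv : t • (-v₀) = z := by
      rw [hv₀, neg_smul, neg_neg, smul_smul, mul_inv_cancel₀ htne, one_smul]
    set G₀ : ℝ := t⁻¹ with hG₀def
    have hG₀pos : 0 < G₀ := by positivity
    have hv₀n : ‖v₀‖^2 = G₀^2 - 1 := by
      rw [hv₀, norm_smul, Real.norm_eq_abs, abs_neg, abs_inv, abs_of_pos ht, hG₀def]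
      exact aux_vsq t ‖z‖ ht hzt
    have hG₀1 : 1 ≤ G₀ := sq_le_sq_imp_le hG₀pos.le
      (by rw [one_pow]; linarith [hv₀n, sq_nonneg ‖v₀‖])
    have hv₀G₀ : ‖v₀‖ ≤ G₀ := sq_le_sq_imp_le hG₀pos.le (by linarith [hv₀n])
    have hsplit : w - ν = pmk (ρ • (v₀ - g)) 0 + (ρ - t) • pmk (-v₀) 1 := by
      rw [hwdef, hνz, ← hzv, pmk_smul, pmk_add, pmk_sub]
      exact congrArg _ (Prod.ext (by module) (by ring))
    have hn1 : ‖pmk (ρ • (v₀ - g)) 0‖ ≤ ‖g - v₀‖ := by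
      rw [norm_pmk_zero, norm_smul, Real.norm_eq_abs, abs_of_pos hρpos, norm_sub_rev]
      exact mul_le_of_le_one_left (norm_nonneg _) hρ1
    have hn2 : ‖pmk (-v₀) (1:ℝ)‖ = G₀ := by
      have hsq2 : ‖pmk (-v₀) (1:ℝ)‖^2 = G₀^2 := by
        rw [norm_pmk_sq, norm_neg, one_pow]
        linarith [hv₀n]
      have h := congrArg Real.sqrt hsq2
      rwa [Real.sqrt_sq (norm_nonneg _), Real.sqrt_sq hG₀pos.le] at h
    have habs2 : |G₀ - G| ≤ ‖g - v₀‖ := by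
      obtain ⟨hab1, hab2⟩ := abs_le.mp (abs_norm_sub_norm_le g v₀)
      have hG₀sq : G₀^2 = 1 + ‖v₀‖^2 := by linarith [hv₀n]
      exact aux_absdiff ‖g‖ ‖v₀‖ ‖g - v₀‖ G G₀ (norm_nonneg g) (norm_nonneg v₀)
        (by linarith) (by linarith) hGsq hG₀sq hG1 hG₀1 hgG hv₀G₀
    have hγ : |ρ - t| * G₀ ≤ |G₀ - G| := by
      have ht' : t = G₀⁻¹ := by rw [hG₀def, inv_inv]
      have hGpos : (0:ℝ) < G := lt_of_lt_of_le one_pos hG1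
      have he : (ρ - t) * G₀ = (G₀ - G)/G := by
        rw [hρdef, ht']
        field_simp
      calc |ρ - t| * G₀ = |(ρ - t) * G₀| := by rw [abs_mul, abs_of_pos hG₀pos]
      _ = |G₀ - G|/G := by rw [he, abs_div, abs_of_pos hGpos]
      _ ≤ |G₀ - G| := div_le_self (abs_nonneg _) hG1
    calc ‖w - ν‖ ≤ ‖pmk (ρ • (v₀ - g)) 0‖ + ‖(ρ - t) • pmk (-v₀) 1‖ := by
          rw [hsplit]; exact norm_add_le _ _
    _ = ‖pmk (ρ • (v₀ - g)) 0‖ + |ρ - t| * G₀ := by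
          rw [norm_smul, Real.norm_eq_abs, hn2]
    _ ≤ ‖g - v₀‖ + ‖g - v₀‖ := add_le_add hn1 (hγ.trans habs2)
    _ = 2*‖g - v₀‖ := by ring
  have hd2 : dist ν ν' < ε := by
    have h1 : dist ν ν' ≤ ‖ν - w‖ + ‖w - ν'‖ := by
      rw [dist_eq_norm]
      calc ‖ν - ν'‖ = ‖(ν - w) + (w - ν')‖ := by abel_nf
      _ ≤ ‖ν - w‖ + ‖w - ν'‖ := norm_add_le _ _
    rw [norm_sub_rev ν w, norm_sub_rev w ν'] at h1
    have h2 : ‖w - ν‖ ≤ ε/4 := by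
      refine hwνb.trans ?_
      have := hgv.le.trans hε'ε
      linarith
    linarith [hν'w]
  exact ⟨(p', ν'), hmem, by rw [Prod.dist_eq]; exact max_lt hd1 hd2⟩
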